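/- arXiv:2502.17412 — 2 statements merged into one kernel-verified Lean document; each statement's English description precedes it below -/
import Mathlib

section
/- Let P and Q be real symmetric d × d matrices such that both P and P + Q are positive semi-definite. Then ‖√(P+Q) − √P‖ ≤ 3·√‖Q‖, where √M denotes the unique positive semi-definite square root of a positive semi-definite matrix M, and ‖·‖ denotes the operator (spectral) norm. -/
open Matrix
open scoped InnerProductSpace

open scoped ComplexOrder in
/-- The square root of a positive semidefinite matrix, as defined in the older Mathlib. -/
noncomputable def Matrix.PosSemidef.sqrt {n 𝕜 : Type*} [Fintype n] [RCLike 𝕜] [DecidableEq n]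
    {A : Matrix n n 𝕜} (hA : A.PosSemidef) : Matrix n n 𝕜 :=
  hA.1.eigenvectorUnitary.1 * diagonal ((↑) ∘ (√·) ∘ hA.1.eigenvalues) *
  (star hA.1.eigenvectorUnitary : Matrix n n 𝕜)

/-- Operator (spectral) norm of a real square matrix, via its action on Euclidean space. -/
noncomputable def opNorm {d : ℕ} (M : Matrix (Fin d) (Fin d) ℝ) : ℝ :=
  ‖Matrix.toEuclideanCLM (𝕜 := ℝ) M‖

namespace SqrtGapAux

variable {d : ℕ}

lemma equiv_CLM (M : Matrix (Fin d) (Fin d) ℝ) (x : EuclideanSpace ℝ (Fin d)) :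
    WithLp.equiv 2 (Fin d → ℝ) (Matrix.toEuclideanCLM (𝕜 := ℝ) M x)
      = M *ᵥ (WithLp.equiv 2 (Fin d → ℝ) x) := by
  rfl

lemma posSemidef_sqrt_aux {A : Matrix (Fin d) (Fin d) ℝ} (hA : A.PosSemidef) :
    hA.sqrt.PosSemidef := by
  unfold Matrix.PosSemidef.sqrt
  simp only [Unitary.coe_star, star_eq_conjTranspose]
  apply PosSemidef.mul_mul_conjTranspose_same
  exact posSemidef_diagonal_iff.mpr fun i => by simp [Real.sqrt_nonneg]

lemma sqrt_mul_self_aux {A : Matrix (Fin d) (Fin d) ℝ} (hA : A.PosSemidef) :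
    hA.sqrt * hA.sqrt = A := by
  unfold Matrix.PosSemidef.sqrt
  set U : Matrix (Fin d) (Fin d) ℝ := hA.1.eigenvectorUnitary.1 with hU
  have hU1 : star U * U = 1 := Unitary.coe_star_mul_self _
  have hD : diagonal ((↑) ∘ (√·) ∘ hA.1.eigenvalues : Fin d → ℝ) *
      diagonal ((↑) ∘ (√·) ∘ hA.1.eigenvalues : Fin d → ℝ) =
      diagonal (RCLike.ofReal ∘ hA.1.eigenvalues) := by
    rw [diagonal_mul_diagonal]
    congr 1
    funext i
    simp [Real.mul_self_sqrt (hA.eigenvalues_nonneg i)]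
  calc U * diagonal ((↑) ∘ (√·) ∘ hA.1.eigenvalues) * star U *
        (U * diagonal ((↑) ∘ (√·) ∘ hA.1.eigenvalues) * star U)
      = U * (diagonal ((↑) ∘ (√·) ∘ hA.1.eigenvalues) * (star U * U) *
        diagonal ((↑) ∘ (√·) ∘ hA.1.eigenvalues)) * star U := by
        simp only [Matrix.mul_assoc]
    _ = U * diagonal (RCLike.ofReal ∘ hA.1.eigenvalues) * star U := by
        rw [hU1, Matrix.mul_one, hD]
    _ = A := by
        conv_rhs => rw [hA.1.spectral_theorem]
        simp [hU]

lemma inner_eq (x y : EuclideanSpace ℝ (Fin d)) :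
    ⟪x, y⟫_ℝ = (WithLp.equiv 2 (Fin d → ℝ) x) ⬝ᵥ (WithLp.equiv 2 (Fin d → ℝ) y) := by
  rw [EuclideanSpace.inner_eq_star_dotProduct]
  exact dotProduct_comm _ _

/-- If all eigenvalues of a hermitian matrix are bounded by `t` in absolute value, then so is
its operator norm. -/
lemma opNorm_le_of_eigen {D : Matrix (Fin d) (Fin d) ℝ} (hD : D.IsHermitian) {t : ℝ}
    (ht : 0 ≤ t) (h : ∀ i, |hD.eigenvalues i| ≤ t) : opNorm D ≤ t := by
  refine ContinuousLinearMap.opNorm_le_bound _ ht ?_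
  intro x
  set T := Matrix.toEuclideanCLM (𝕜 := ℝ) D with hT
  have hTsa : _root_.IsSelfAdjoint T := by
    rw [_root_.IsSelfAdjoint, ← map_star]
    congr 1
  have hsym := hTsa.isSymmetric
  set b := hD.eigenvectorBasis with hb
  have hTb : ∀ i, T (b i) = hD.eigenvalues i • b i := by
    intro i
    apply (WithLp.equiv 2 (Fin d → ℝ)).injective
    rw [equiv_CLM]
    exact hD.mulVec_eigenvectorBasis i
  have hrepr : ∀ i, b.repr (T x) i = hD.eigenvalues i * b.repr x i := by
    intro i
    rw [b.repr_apply_apply, b.repr_apply_apply]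
    have hs : ⟪T (b i), x⟫_ℝ = ⟪b i, T x⟫_ℝ := hsym (b i) x
    rw [← hs, hTb i, real_inner_smul_left]
  have h1 : ‖T x‖ ^ 2 ≤ t ^ 2 * ‖x‖ ^ 2 := by
    have e1 : ‖T x‖ = ‖b.repr (T x)‖ := (b.repr.norm_map (T x)).symm
    have e2 : ‖x‖ = ‖b.repr x‖ := (b.repr.norm_map x).symm
    rw [e1, e2, EuclideanSpace.norm_eq, EuclideanSpace.norm_eq,
      Real.sq_sqrt (by positivity), Real.sq_sqrt (by positivity), Finset.mul_sum]
    refine Finset.sum_le_sum fun i _ => ?_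
    rw [hrepr i]
    simp only [Real.norm_eq_abs, sq_abs]
    rw [mul_pow]
    have : (hD.eigenvalues i) ^ 2 ≤ t ^ 2 := by
      have := h i
      nlinarith [abs_nonneg (hD.eigenvalues i), sq_abs (hD.eigenvalues i)]
    nlinarith [sq_nonneg (b.repr x i)]
  have hTx : 0 ≤ ‖T x‖ := norm_nonneg _
  have htx : 0 ≤ t * ‖x‖ := by positivity
  nlinarith

end SqrtGapAux

open SqrtGapAux in
/-- **Square-root gap.** If `P` and `P + Q` are positive semi-definite (and `Q` symmetric),
then `‖√(P+Q) − √P‖ ≤ 3·√‖Q‖`. -/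
theorem sqrt_gap {d : ℕ} (P Q : Matrix (Fin d) (Fin d) ℝ)
    (hQsymm : Q.IsSymm) (hP : P.PosSemidef) (hPQ : (P + Q).PosSemidef) :
    opNorm (hPQ.sqrt - hP.sqrt) ≤ 3 * Real.sqrt (opNorm Q) := by
  set A := hPQ.sqrt with hAdef
  set B := hP.sqrt with hBdef
  have hA : A.PosSemidef := posSemidef_sqrt_aux hPQ
  have hB : B.PosSemidef := posSemidef_sqrt_aux hP
  have hD : (A - B).IsHermitian := hA.1.sub hB.1
  have ht0 : 0 ≤ Real.sqrt (opNorm Q) := Real.sqrt_nonneg _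
  have hQeq : Q = A * (A - B) + (A - B) * B := by
    have h1 : A * A = P + Q := sqrt_mul_self_aux hPQ
    have h2 : B * B = P := sqrt_mul_self_aux hP
    rw [mul_sub, sub_mul, h1, h2]
    abel
  have key : ∀ i, |hD.eigenvalues i| ≤ Real.sqrt (opNorm Q) := by
    intro i
    set v : EuclideanSpace ℝ (Fin d) := hD.eigenvectorBasis i with hvdef
    set w : Fin d → ℝ := WithLp.equiv 2 (Fin d → ℝ) v with hwdef
    set μ : ℝ := hD.eigenvalues i with hmudef
    have hveig : (A - B) *ᵥ w = μ • w := hD.mulVec_eigenvectorBasis i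
    have hvnorm : ‖v‖ = 1 := hD.eigenvectorBasis.orthonormal.1 i
    have hvv : w ⬝ᵥ w = 1 := by
      have := real_inner_self_eq_norm_sq v
      rw [hvnorm, inner_eq] at this
      simpa [hwdef] using this
    set a : ℝ := w ⬝ᵥ (A *ᵥ w) with hadef
    set bb : ℝ := w ⬝ᵥ (B *ᵥ w) with hbbdef
    have ha : 0 ≤ a := by simpa using hA.dotProduct_mulVec_nonneg w
    have hb : 0 ≤ bb := by simpa using hB.dotProduct_mulVec_nonneg w
    have hmu : μ = a - bb := by
      have : w ⬝ᵥ ((A - B) *ᵥ w) = μ := by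
        rw [hveig, dotProduct_smul, hvv]; simp
      rw [← this, sub_mulVec, dotProduct_sub]
    -- symmetric shuffle : w ⬝ᵥ ((A - B) *ᵥ u) = ((A - B) *ᵥ w) ⬝ᵥ u
    have hshuf : ∀ u : Fin d → ℝ, w ⬝ᵥ ((A - B) *ᵥ u) = ((A - B) *ᵥ w) ⬝ᵥ u := by
      intro u
      rw [dotProduct_mulVec, ← mulVec_transpose]
      congr 2
    have hQv : w ⬝ᵥ (Q *ᵥ w) = μ * (a + bb) := by
      rw [hQeq, add_mulVec, dotProduct_add, ← mulVec_mulVec, ← mulVec_mulVec,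
        hveig]
      rw [mulVec_smul, dotProduct_smul, hshuf, hveig, smul_dotProduct]
      simp only [smul_eq_mul]
      ring
    have hQle : |w ⬝ᵥ (Q *ᵥ w)| ≤ opNorm Q := by
      have e : w ⬝ᵥ (Q *ᵥ w) = ⟪v, (Matrix.toEuclideanCLM (𝕜 := ℝ) Q) v⟫_ℝ := by
        rw [inner_eq, equiv_CLM]
      rw [e]
      calc |⟪v, (Matrix.toEuclideanCLM (𝕜 := ℝ) Q) v⟫_ℝ|
          ≤ ‖v‖ * ‖(Matrix.toEuclideanCLM (𝕜 := ℝ) Q) v‖ := abs_real_inner_le_norm _ _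
        _ ≤ ‖v‖ * (‖(Matrix.toEuclideanCLM (𝕜 := ℝ) Q)‖ * ‖v‖) := by
            gcongr; exact ContinuousLinearMap.le_opNorm _ _
        _ = opNorm Q := by rw [hvnorm, opNorm]; ring
    have hmuabs : |μ| ≤ a + bb := by
      rw [hmu]
      have : |a - bb| ≤ a + bb := by
        rw [abs_sub_le_iff]; constructor <;> linarith
      exact this
    have hsq : μ ^ 2 ≤ opNorm Q := by
      have h2 : |μ| * (a + bb) = |μ * (a + bb)| := by
        rw [abs_mul, abs_of_nonneg (by linarith : (0:ℝ) ≤ a + bb)]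
      nlinarith [abs_nonneg μ, sq_abs μ, abs_nonneg (w ⬝ᵥ (Q *ᵥ w)), hQv ▸ hQle,
        le_abs_self (μ * (a + bb))]
    calc |μ| = Real.sqrt (μ ^ 2) := by rw [Real.sqrt_sq_eq_abs]
      _ ≤ Real.sqrt (opNorm Q) := Real.sqrt_le_sqrt hsq
  have hmain : opNorm (A - B) ≤ Real.sqrt (opNorm Q) := opNorm_le_of_eigen hD ht0 key
  linarith
end

section
/- Let n ≥ 1 and let 0 ≤ t_1 < t_2 < … < t_m ≤ 1 be real numbers such that for each j there exists ℓ ∈ {1, …, n} with t_j · 2^ℓ · ℓ⁴ ∈ ℤ. Define complex vectors v_0, …, v_{2^n − 1} ∈ ℂ^m by (v_k)_j = exp(2πi·k·t_j), and let W = Re( (1/2^n) · Σ_{k=0}^{2^n − 1} v_k v_k^† ) be the entrywise real part, where v_k^† is the conjugate transpose. Then there is a universal constant C such that ‖W‖ ≤ C·n^{10}, where ‖·‖ denotes the operator norm of the real symmetric m × m matrix W. -/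
open Matrix Complex

open Finset Real

noncomputable def S (N : ℕ) (θ : ℝ) : ℂ :=
  (N : ℂ)⁻¹ * ∑ k ∈ Finset.range N, Complex.exp (2 * Real.pi * Complex.I * k * θ)

lemma abs_S_le_one (N : ℕ) (hN : 0 < N) (θ : ℝ) : |(S N θ).re| ≤ 1 := by
  refine (Complex.abs_re_le_norm _).trans ?_
  rw [S, norm_mul]
  have h1 : ∀ k : ℕ, ‖(Complex.exp (2 * Real.pi * Complex.I * k * θ))‖ = 1 := by
    intro k
    rw [Complex.norm_exp]
    have : (2 * (Real.pi:ℂ) * Complex.I * k * θ).re = 0 := by simp [Complex.mul_re, Complex.mul_im]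
    rw [this, Real.exp_zero]
  have h2 : ‖(∑ k ∈ Finset.range N, Complex.exp (2 * Real.pi * Complex.I * k * θ))‖ ≤ N := by
    refine (norm_sum_le _ _).trans ?_
    simp [h1]
  calc ‖((N:ℂ))⁻¹‖ * ‖(∑ k ∈ Finset.range N, Complex.exp (2 * Real.pi * Complex.I * k * θ))‖
      ≤ (N:ℝ)⁻¹ * N := by
        rw [norm_inv, Complex.norm_natCast]
        gcongr
    _ = 1 := inv_mul_cancel₀ (by positivity)

lemma abs_exp_two_pi_I_sub_one (θ : ℝ) :
    ‖(Complex.exp (2 * Real.pi * Complex.I * θ) - 1)‖ = 2 * |Real.sin (Real.pi * θ)| := by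
  have h : (2 * (Real.pi:ℂ) * Complex.I * θ) = ((2 * Real.pi * θ : ℝ) : ℂ) * Complex.I := by
    push_cast; ring
  rw [h, Complex.norm_def, Complex.normSq_apply]
  simp only [Complex.sub_re, Complex.sub_im, Complex.exp_ofReal_mul_I_re,
    Complex.exp_ofReal_mul_I_im, Complex.one_re, Complex.one_im, sub_zero]
  have hcos : Real.cos (2*Real.pi*θ) = 1 - 2 * Real.sin (Real.pi*θ)^2 := by
    have h2 : (2*Real.pi*θ) = 2 * (Real.pi*θ) := by ring
    rw [h2, Real.cos_two_mul']
    nlinarith [Real.sin_sq_add_cos_sq (Real.pi*θ)]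
  have hsin : Real.sin (2*Real.pi*θ) = 2 * Real.sin (Real.pi*θ) * Real.cos (Real.pi*θ) := by
    have h2 : (2*Real.pi*θ) = 2 * (Real.pi*θ) := by ring
    rw [h2, Real.sin_two_mul]
  rw [hcos, hsin]
  have : (1 - 2 * Real.sin (Real.pi*θ)^2 - 1) * (1 - 2 * Real.sin (Real.pi*θ)^2 - 1)
      + (2 * Real.sin (Real.pi*θ) * Real.cos (Real.pi*θ)) * (2 * Real.sin (Real.pi*θ) * Real.cos (Real.pi*θ))
      = (2 * |Real.sin (Real.pi*θ)|)^2 := by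
    have := Real.sin_sq_add_cos_sq (Real.pi*θ)
    have habs : |Real.sin (Real.pi*θ)|^2 = Real.sin (Real.pi*θ)^2 := sq_abs _
    nlinarith
  rw [this, Real.sqrt_sq (by positivity)]

lemma abs_S_le_sin (N : ℕ) (hN : 0 < N) (θ : ℝ) (hs : Real.sin (Real.pi * θ) ≠ 0) :
    |(S N θ).re| ≤ 1 / (N * |Real.sin (Real.pi * θ)|) := by
  set ζ : ℂ := Complex.exp (2 * Real.pi * Complex.I * θ) with hζ
  have hz : ∀ k : ℕ, Complex.exp (2 * Real.pi * Complex.I * k * θ) = ζ ^ k := by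
    intro k
    rw [hζ, ← Complex.exp_nat_mul]
    ring_nf
  have hζne : ζ ≠ 1 := by
    intro h
    have := abs_exp_two_pi_I_sub_one θ
    rw [← hζ, h, sub_self, norm_zero] at this
    have : |Real.sin (Real.pi * θ)| = 0 := by linarith
    exact hs (abs_eq_zero.mp this)
  have hgeom : ∑ k ∈ Finset.range N, ζ ^ k = (ζ ^ N - 1) / (ζ - 1) := geom_sum_eq hζne N
  have habsζ : ‖ζ‖ = 1 := by
    rw [hζ, Complex.norm_exp]
    have : (2 * (Real.pi:ℂ) * Complex.I * θ).re = 0 := by simp [Complex.mul_re, Complex.mul_im]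
    rw [this, Real.exp_zero]
  have hnum : ‖(ζ ^ N - 1)‖ ≤ 2 := by
    calc ‖(ζ ^ N - 1)‖ ≤ ‖(ζ ^ N)‖ + 1 := by
          simpa using (norm_sub_le (ζ^N) 1)
      _ = 2 := by rw [norm_pow, habsζ, one_pow]; norm_num
  have hden : ‖(ζ - 1)‖ = 2 * |Real.sin (Real.pi * θ)| := by
    rw [hζ]; exact abs_exp_two_pi_I_sub_one θ
  refine (Complex.abs_re_le_norm _).trans ?_
  rw [S, norm_mul, norm_inv, Complex.norm_natCast]
  simp_rw [hz, hgeom, norm_div, hden]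
  have hsinpos : 0 < |Real.sin (Real.pi * θ)| := abs_pos.mpr hs
  rw [one_div, mul_inv]
  gcongr
  rw [div_le_iff₀ (by positivity)]
  have h22 : |Real.sin (Real.pi*θ)|⁻¹ * (2 * |Real.sin (Real.pi*θ)|) = 2 := by
    field_simp
  rw [h22]
  exact hnum

lemma sin_pi_lower {x : ℝ} (h0 : 0 < x) (h1 : x < 1) :
    2 * min x (1 - x) ≤ Real.sin (Real.pi * x) := by
  rcases le_or_gt x (1/2) with hx | hx
  · have hmin : min x (1-x) = x := min_eq_left (by linarith)
    rw [hmin]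
    have := Real.mul_le_sin (x := Real.pi * x) (by positivity)
      (by nlinarith [Real.pi_pos])
    calc 2 * x = 2 / Real.pi * (Real.pi * x) := by
          field_simp
      _ ≤ Real.sin (Real.pi * x) := this
  · have hmin : min x (1-x) = 1 - x := min_eq_right (by linarith)
    rw [hmin]
    have hs : Real.sin (Real.pi * x) = Real.sin (Real.pi * (1 - x)) := by
      rw [show Real.pi * (1-x) = Real.pi - Real.pi * x by ring, Real.sin_pi_sub]
    rw [hs]
    have := Real.mul_le_sin (x := Real.pi * (1 - x)) (by nlinarith [Real.pi_pos])
      (by nlinarith [Real.pi_pos])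
    calc 2 * (1 - x) = 2 / Real.pi * (Real.pi * (1 - x)) := by
          field_simp
      _ ≤ Real.sin (Real.pi * (1 - x)) := this


lemma schur_bound {d : ℕ} (M : Matrix (Fin d) (Fin d) ℝ) (B : ℝ) (hB : 0 ≤ B)
    (hrow : ∀ i, ∑ j, |M i j| ≤ B) (hcol : ∀ j, ∑ i, |M i j| ≤ B) :
    opNorm M ≤ B := by
  rw [opNorm]
  refine ContinuousLinearMap.opNorm_le_bound _ hB (fun x => ?_)
  set y := Matrix.toEuclideanCLM (𝕜 := ℝ) M x with hy
  have hyi : ∀ i, y i = ∑ j, M i j * x j := by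
    intro i
    have := Matrix.ofLp_toEuclideanCLM (𝕜 := ℝ) M x
    have h2 : (WithLp.ofLp y) i = Matrix.mulVec M (WithLp.ofLp x) i := by
      rw [hy, this]
    simpa [Matrix.toLin'_apply, Matrix.mulVec, dotProduct] using h2
  have hynorm : ‖y‖^2 = ∑ i, (y i)^2 := by
    rw [EuclideanSpace.norm_eq, Real.sq_sqrt (by positivity)]
    simp [Real.norm_eq_abs, _root_.sq_abs]
  have hxnorm : ‖x‖^2 = ∑ j, (x j)^2 := by
    rw [EuclideanSpace.norm_eq, Real.sq_sqrt (by positivity)]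
    simp [Real.norm_eq_abs, _root_.sq_abs]
  have key : ∀ i, (y i)^2 ≤ B * ∑ j, |M i j| * (x j)^2 := by
    intro i
    have h1 : (y i)^2 ≤ (∑ j, |M i j| * |x j|)^2 := by
      rw [hyi i, ← _root_.sq_abs]
      have habs : |∑ j, M i j * x j| ≤ ∑ j, |M i j| * |x j| := by
        refine (Finset.abs_sum_le_sum_abs _ _).trans ?_
        simp [abs_mul, le_refl]
      exact pow_le_pow_left₀ (abs_nonneg _) habs 2
    have h2 : (∑ j, |M i j| * |x j|)^2 ≤ (∑ j, |M i j|) * (∑ j, |M i j| * (x j)^2) := by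
      have := Finset.sum_mul_sq_le_sq_mul_sq Finset.univ
        (fun j => Real.sqrt |M i j|) (fun j => Real.sqrt |M i j| * |x j|)
      calc (∑ j, |M i j| * |x j|)^2
          = (∑ j, Real.sqrt |M i j| * (Real.sqrt |M i j| * |x j|))^2 := by
            congr 1; refine Finset.sum_congr rfl (fun j _ => ?_)
            rw [← mul_assoc, Real.mul_self_sqrt (abs_nonneg _)]
        _ ≤ (∑ j, Real.sqrt |M i j| ^ 2) * (∑ j, (Real.sqrt |M i j| * |x j|)^2) := this
        _ = (∑ j, |M i j|) * (∑ j, |M i j| * (x j)^2) := by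
            congr 1
            · exact Finset.sum_congr rfl (fun j _ => Real.sq_sqrt (abs_nonneg _))
            · refine Finset.sum_congr rfl (fun j _ => ?_)
              rw [mul_pow, Real.sq_sqrt (abs_nonneg _), _root_.sq_abs]
    have h3 : (∑ j, |M i j|) * (∑ j, |M i j| * (x j)^2) ≤ B * ∑ j, |M i j| * (x j)^2 := by
      have hnn : 0 ≤ ∑ j, |M i j| * (x j)^2 := by positivity
      exact mul_le_mul_of_nonneg_right (hrow i) hnn
    linarith
  have main : ‖y‖^2 ≤ B^2 * ‖x‖^2 := by
    rw [hynorm, hxnorm]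
    calc ∑ i, (y i)^2 ≤ ∑ i, B * ∑ j, |M i j| * (x j)^2 :=
          Finset.sum_le_sum (fun i _ => key i)
      _ = B * ∑ j, (x j)^2 * ∑ i, |M i j| := by
          rw [← Finset.mul_sum, Finset.sum_comm]
          congr 1
          refine Finset.sum_congr rfl (fun j _ => ?_)
          rw [Finset.mul_sum]
          refine Finset.sum_congr rfl (fun i _ => by ring)
      _ ≤ B * ∑ j, (x j)^2 * B := by
          refine mul_le_mul_of_nonneg_left ?_ hB
          refine Finset.sum_le_sum (fun j _ => ?_)
          exact mul_le_mul_of_nonneg_left (hcol j) (by positivity)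
      _ = B^2 * ∑ j, (x j)^2 := by rw [← Finset.sum_mul]; ring
  nlinarith [norm_nonneg y, norm_nonneg x, mul_nonneg hB (norm_nonneg x)]

lemma entry_eq (N : ℕ) (a b : ℝ) :
    ((N : ℂ)⁻¹ * ∑ k ∈ Finset.range N,
      Complex.exp (2 * Real.pi * Complex.I * k * a) *
        (starRingEnd ℂ) (Complex.exp (2 * Real.pi * Complex.I * k * b))) = S N (a - b) := by
  rw [S]
  congr 1
  refine Finset.sum_congr rfl fun k _ => ?_
  rw [← Complex.exp_conj, ← Complex.exp_add]
  congr 1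
  simp only [_root_.map_mul, Complex.conj_I, Complex.conj_ofReal, Complex.conj_natCast, _root_.map_ofNat,
    Complex.ofReal_sub]
  ring

lemma S_neg_re (N : ℕ) (θ : ℝ) : (S N (-θ)).re = (S N θ).re := by
  have h : S N (-θ) = (starRingEnd ℂ) (S N θ) := by
    rw [S, S, _root_.map_mul, _root_.map_sum, map_inv₀, Complex.conj_natCast]
    congr 1
    refine Finset.sum_congr rfl fun k _ => ?_
    rw [← Complex.exp_conj]
    congr 1
    simp only [_root_.map_mul, Complex.conj_I, Complex.conj_ofReal, Complex.conj_natCast, _root_.map_ofNat,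
      Complex.ofReal_neg]
    ring
  rw [h, Complex.conj_re]

lemma term_bound (N P D : ℕ) (hN : 0 < N) (hP : 0 < P) (hD : D = N * P) (θ : ℝ) (q : ℤ)
    (hq : (q : ℝ) = θ * D) (hq0 : q ≠ 0) (hqD : q.natAbs < D) :
    |(S N θ).re| ≤ (P : ℝ)/2 * (1/(q.natAbs : ℝ) + 1/((D : ℝ) - q.natAbs)) := by
  have hDpos : 0 < D := by omega
  set r : ℕ := q.natAbs with hr
  have hr1 : 1 ≤ r := by
    have : q.natAbs ≠ 0 := fun h => hq0 (Int.natAbs_eq_zero.mp h)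
    omega
  have hrD : r < D := hqD
  have hrR : (1:ℝ) ≤ r := by exact_mod_cast hr1
  have hrDR : (r:ℝ) < D := by exact_mod_cast hrD
  have hDR : (0:ℝ) < D := by exact_mod_cast hDpos
  set x : ℝ := (r : ℝ) / D with hx
  have hx0 : 0 < x := by positivity
  have hx1 : x < 1 := by rw [hx, div_lt_one hDR]; exact hrDR
  -- |θ| = x
  have hqabs : |(q:ℝ)| = (r:ℝ) := by
    rw [hr, Nat.cast_natAbs, Int.cast_abs]
  have habsθ : |θ| = x := by
    have hθ : θ = (q : ℝ) / D := by
      field_simp at hq ⊢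
      linarith [hq]
    rw [hθ, abs_div, abs_of_pos hDR, hqabs, hx]
  -- lower bound on |sin (π θ)|
  have hsin : 2 * min x (1 - x) ≤ |Real.sin (Real.pi * θ)| := by
    have h1 : |Real.sin (Real.pi * θ)| = |Real.sin (Real.pi * |θ|)| := by
      rcases abs_cases θ with ⟨h, _⟩ | ⟨h, _⟩
      · rw [h]
      · rw [h, mul_neg, Real.sin_neg, abs_neg]
    rw [h1, habsθ]
    exact (sin_pi_lower hx0 hx1).trans (le_abs_self _)
  have hminpos : 0 < min x (1 - x) := lt_min hx0 (by linarith)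
  have hsinne : Real.sin (Real.pi * θ) ≠ 0 := by
    intro h
    rw [h, abs_zero] at hsin
    linarith
  refine (abs_S_le_sin N hN θ hsinne).trans ?_
  have h2 : 1 / (N * |Real.sin (Real.pi * θ)|) ≤ 1 / (N * (2 * min x (1 - x))) := by
    apply one_div_le_one_div_of_le
    · positivity
    · have : (0:ℝ) < N := by exact_mod_cast hN
      apply mul_le_mul_of_nonneg_left hsin (le_of_lt this)
  refine h2.trans ?_
  have hNR : (0:ℝ) < N := by exact_mod_cast hN
  have hPR : (0:ℝ) < P := by exact_mod_cast hP
  have hDNP : (D:ℝ) = N * P := by exact_mod_cast hD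
  rcases min_cases x (1 - x) with ⟨hmin, _⟩ | ⟨hmin, _⟩ <;> rw [hmin]
  · -- min = x = r / D
    have key : 1 / (N * (2 * x)) = (P:ℝ)/2 * (1/(r:ℝ)) := by
      rw [hx, hDNP]
      have hrne : (r:ℝ) ≠ 0 := by positivity
      have hNne : (N:ℝ) ≠ 0 := ne_of_gt hNR
      have hPne : (P:ℝ) ≠ 0 := ne_of_gt hPR
      field_simp
    rw [key]
    have : (0:ℝ) < (D:ℝ) - r := by linarith
    have h3 : 0 ≤ (P:ℝ)/2 * (1/((D:ℝ) - r)) := by positivity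
    nlinarith
  · -- min = 1 - x = (D - r)/D
    have hone : 1 - x = ((D:ℝ) - r) / D := by rw [hx]; field_simp
    have hDr : (0:ℝ) < (D:ℝ) - r := by linarith
    have key : 1 / (N * (2 * (1 - x))) = (P:ℝ)/2 * (1/((D:ℝ) - r)) := by
      rw [hone, hDNP]
      have hrne : (N:ℝ)*(P:ℝ) - (r:ℝ) ≠ 0 := by rw [← hDNP]; exact ne_of_gt hDr
      have hNne : (N:ℝ) ≠ 0 := ne_of_gt hNR
      have hPne : (P:ℝ) ≠ 0 := ne_of_gt hPR
      field_simp
    rw [key]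
    have h3 : 0 ≤ (P:ℝ)/2 * (1/(r:ℝ)) := by positivity
    nlinarith

lemma harmonic_sum_le (K : ℕ) : ∑ s ∈ Finset.Icc 1 K, 1/(s:ℝ) ≤ 1 + Real.log K := by
  have h1 : ∑ s ∈ Finset.Icc 1 K, 1/(s:ℝ) = (harmonic K : ℝ) := by
    rw [harmonic_eq_sum_Icc]
    push_cast
    simp [one_div]
  rw [h1]
  exact harmonic_le_one_add_log K

lemma sum_H_le (D P n : ℕ) (hD : 1 ≤ D) (hn : 1 ≤ n) (hlog : Real.log D ≤ 9*n) :
    ∑ x ∈ Finset.Icc (-(D:ℤ)) (D:ℤ),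
      (if x.natAbs = 0 ∨ x.natAbs = D then (1:ℝ)
       else (P:ℝ)/2 * (1/(x.natAbs:ℝ) + 1/((D:ℝ) - x.natAbs))) ≤ 3 + 2*P*(1 + 9*n) := by
  set h : ℕ → ℝ := fun s => if s = 0 ∨ s = D then (1:ℝ)
    else (P:ℝ)/2 * (1/(s:ℝ) + 1/((D:ℝ) - s)) with hh
  have hsplit : ∑ x ∈ Finset.Icc (-(D:ℤ)) (D:ℤ), h x.natAbs
      = (∑ x ∈ Finset.Ico (-(D:ℤ)) 0, h x.natAbs) + ∑ x ∈ Finset.Icc (0:ℤ) D, h x.natAbs := by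
    have hset : Finset.Icc (-(D:ℤ)) (D:ℤ) = Finset.Ico (-(D:ℤ)) 0 ∪ Finset.Icc (0:ℤ) D := by
      ext x
      simp only [Finset.mem_Icc, Finset.mem_Ico, Finset.mem_union]
      omega
    rw [hset, Finset.sum_union]
    rw [Finset.disjoint_left]
    intro x hx1 hx2
    simp only [Finset.mem_Icc, Finset.mem_Ico] at hx1 hx2
    omega
  have hneg : ∑ x ∈ Finset.Ico (-(D:ℤ)) 0, h x.natAbs = ∑ s ∈ Finset.Icc 1 D, h s := by
    refine Finset.sum_nbij' (fun x => x.natAbs) (fun s => -(s:ℤ)) ?_ ?_ ?_ ?_ ?_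
    · intro x hx
      simp only [Finset.mem_Ico] at hx
      simp only [Finset.mem_Icc]
      omega
    · intro s hs
      simp only [Finset.mem_Icc] at hs
      simp only [Finset.mem_Ico]
      omega
    · intro x hx
      simp only [Finset.mem_Ico] at hx
      show -((x.natAbs : ℤ)) = x
      omega
    · intro s hs
      simp only [Finset.mem_Icc] at hs
      show (-(s:ℤ)).natAbs = s
      omega
    · intro x hx
      rfl
  have hpos : ∑ x ∈ Finset.Icc (0:ℤ) D, h x.natAbs = ∑ s ∈ Finset.Icc 0 D, h s := by
    refine Finset.sum_nbij' (fun x => x.natAbs) (fun s => (s:ℤ)) ?_ ?_ ?_ ?_ ?_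
    · intro x hx
      simp only [Finset.mem_Icc] at hx
      simp only [Finset.mem_Icc]
      omega
    · intro s hs
      simp only [Finset.mem_Icc] at hs
      simp only [Finset.mem_Icc]
      omega
    · intro x hx
      simp only [Finset.mem_Icc] at hx
      show ((x.natAbs : ℤ)) = x
      omega
    · intro s hs
      show ((s:ℤ)).natAbs = s
      omega
    · intro x hx
      rfl
  have h0 : ∑ s ∈ Finset.Icc 0 D, h s = h 0 + ∑ s ∈ Finset.Icc 1 D, h s := by
    have : Finset.Icc 0 D = insert 0 (Finset.Icc 1 D) := by
      ext s
      simp only [Finset.mem_Icc, Finset.mem_insert]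
      omega
    rw [this, Finset.sum_insert (by simp)]
  have hDstep : ∑ s ∈ Finset.Icc 1 D, h s = h D + ∑ s ∈ Finset.Icc 1 (D-1), h s := by
    have : Finset.Icc 1 D = insert D (Finset.Icc 1 (D-1)) := by
      ext s
      simp only [Finset.mem_Icc, Finset.mem_insert]
      omega
    rw [this, Finset.sum_insert (by simp only [Finset.mem_Icc]; omega)]
  have hA : ∑ s ∈ Finset.Icc 1 (D-1), 1/(s:ℝ) ≤ 1 + 9*(n:ℝ) := by
    refine (harmonic_sum_le (D-1)).trans ?_
    have hlog2 : Real.log (D-1:ℕ) ≤ Real.log D := by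
      rcases Nat.eq_or_lt_of_le hD with h1 | h2
      · simp [← h1]
      · apply Real.log_le_log (by exact_mod_cast (by omega : 0 < D - 1))
        exact_mod_cast Nat.sub_le D 1
    have h9 : Real.log D ≤ 9*(n:ℝ) := hlog
    linarith
  have hAnn : (0:ℝ) ≤ ∑ s ∈ Finset.Icc 1 (D-1), 1/(s:ℝ) := by positivity
  have hmid : ∑ s ∈ Finset.Icc 1 (D-1), h s ≤ (P:ℝ) * (1 + 9*n) := by
    have heq : ∀ s ∈ Finset.Icc 1 (D-1), h s = (P:ℝ)/2 * (1/(s:ℝ) + 1/((D:ℝ) - s)) := by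
      intro s hs
      simp only [Finset.mem_Icc] at hs
      rw [hh]
      simp only []
      rw [if_neg (by omega)]
    rw [Finset.sum_congr rfl heq]
    have hrefl : ∑ s ∈ Finset.Icc 1 (D-1), 1/((D:ℝ) - s) = ∑ s ∈ Finset.Icc 1 (D-1), 1/(s:ℝ) := by
      refine Finset.sum_nbij' (fun s => D - s) (fun s => D - s) ?_ ?_ ?_ ?_ ?_
      · intro s hs; simp only [Finset.mem_Icc] at hs ⊢; omega
      · intro s hs; simp only [Finset.mem_Icc] at hs ⊢; omega
      · intro s hs; simp only [Finset.mem_Icc] at hs; show D - (D - s) = s; omega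
      · intro s hs; simp only [Finset.mem_Icc] at hs; show D - (D - s) = s; omega
      · intro s hs
        simp only [Finset.mem_Icc] at hs
        have hc : ((D - s : ℕ) : ℝ) = (D:ℝ) - s := by
          have hsD : s ≤ D := by omega
          push_cast [hsD]
          ring
        rw [hc]
    calc ∑ s ∈ Finset.Icc 1 (D-1), (P:ℝ)/2 * (1/(s:ℝ) + 1/((D:ℝ) - s))
        = (P:ℝ)/2 * ((∑ s ∈ Finset.Icc 1 (D-1), 1/(s:ℝ)) + ∑ s ∈ Finset.Icc 1 (D-1), 1/((D:ℝ) - s)) := by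
          rw [← Finset.mul_sum, Finset.sum_add_distrib]
      _ = (P:ℝ) * ∑ s ∈ Finset.Icc 1 (D-1), 1/(s:ℝ) := by rw [hrefl]; ring
      _ ≤ (P:ℝ) * (1 + 9*n) := by
          apply mul_le_mul_of_nonneg_left hA (by positivity)
  have hh0 : h 0 = 1 := by rw [hh]; simp
  have hhD : h D = 1 := by rw [hh]; simp
  calc ∑ x ∈ Finset.Icc (-(D:ℤ)) (D:ℤ),
      (if x.natAbs = 0 ∨ x.natAbs = D then (1:ℝ)
       else (P:ℝ)/2 * (1/(x.natAbs:ℝ) + 1/((D:ℝ) - x.natAbs)))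
      = ∑ x ∈ Finset.Icc (-(D:ℤ)) (D:ℤ), h x.natAbs := rfl
    _ = (∑ x ∈ Finset.Ico (-(D:ℤ)) 0, h x.natAbs) + ∑ x ∈ Finset.Icc (0:ℤ) D, h x.natAbs := hsplit
    _ = (∑ s ∈ Finset.Icc 1 D, h s) + (h 0 + ∑ s ∈ Finset.Icc 1 D, h s) := by rw [hneg, hpos, h0]
    _ = 1 + 2 * (1 + ∑ s ∈ Finset.Icc 1 (D-1), h s) := by rw [hDstep, hh0, hhD]; ring
    _ ≤ 1 + 2 * (1 + (P:ℝ) * (1 + 9*n)) := by linarith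
    _ = 3 + 2*P*(1 + 9*n) := by ring

lemma row_sum_bound (n m : ℕ) (hn : 1 ≤ n) (t : Fin m → ℝ) (hmono : StrictMono t)
    (hrng : ∀ j, 0 ≤ t j ∧ t j ≤ 1)
    (hden : ∀ j, ∃ ℓ ∈ Finset.Icc 1 n, ∃ z : ℤ, t j * 2 ^ ℓ * ℓ ^ 4 = (z : ℝ))
    (j : Fin m) :
    ∑ j', |(S (2^n) (t j - t j')).re| ≤ 23 * (n:ℝ)^10 := by
  choose a ha z hz using hden
  set ℓ := a j with hℓdef
  obtain ⟨hℓ1, hℓn⟩ := Finset.mem_Icc.mp (ha j)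
  set N : ℕ := 2^n with hNdef
  have hN : 0 < N := Nat.pow_pos (by norm_num)
  have hn1 : (1:ℝ) ≤ n := by exact_mod_cast hn
  -- fiberwise decomposition
  rw [← Finset.sum_fiberwise_of_maps_to (g := a) (fun j' _ => ha j')
    (fun j' => |(S N (t j - t j')).re|)]
  -- bound each fiber
  have fiber_bound : ∀ b ∈ Finset.Icc 1 n,
      ∑ j' ∈ Finset.univ.filter (fun j' => a j' = b), |(S N (t j - t j')).re|
        ≤ 23 * (n:ℝ)^9 := by
    intro b hb
    obtain ⟨hb1, hbn⟩ := Finset.mem_Icc.mp hb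
    set P : ℕ := ℓ^4 * b^4 with hPdef
    set D : ℕ := N * P with hDdef
    have hP : 0 < P := by positivity
    have hD1 : 1 ≤ D := Nat.mul_pos hN hP
    have hDR : (0:ℝ) < D := by exact_mod_cast hD1
    set q : Fin m → ℤ := fun j' => (z j) * 2^(n-ℓ) * (b:ℤ)^4 - (z j') * 2^(n-b) * (ℓ:ℤ)^4
      with hqdef
    have hq : ∀ j' ∈ Finset.univ.filter (fun j' => a j' = b),
        ((q j' : ℝ)) = (t j - t j') * D := by
      intro j' hj'
      have hab : a j' = b := by simpa using hj'
      have e1 := hz j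
      have e2 := hz j'
      rw [hab] at e2
      have h2ℓ : (2:ℝ)^ℓ * 2^(n-ℓ) = 2^n := by
        rw [← pow_add]; congr 1; omega
      have h2b : (2:ℝ)^b * 2^(n-b) = 2^n := by
        rw [← pow_add]; congr 1; omega
      have hDcast : (D:ℝ) = (2:ℝ)^n * ((ℓ:ℝ)^4 * (b:ℝ)^4) := by
        rw [hDdef, hNdef, hPdef]; push_cast; ring
      have e1' : t j * (D:ℝ) = (z j:ℝ) * (2:ℝ)^(n-ℓ) * (b:ℝ)^4 := by
        calc t j * (D:ℝ) = (t j * 2^ℓ * (ℓ:ℝ)^4) * ((2:ℝ)^(n-ℓ) * (b:ℝ)^4) := by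
              rw [hDcast, ← h2ℓ]; ring
          _ = (z j:ℝ) * ((2:ℝ)^(n-ℓ) * (b:ℝ)^4) := by rw [e1]
          _ = _ := by ring
      have e2' : t j' * (D:ℝ) = (z j':ℝ) * (2:ℝ)^(n-b) * (ℓ:ℝ)^4 := by
        calc t j' * (D:ℝ) = (t j' * 2^b * (b:ℝ)^4) * ((2:ℝ)^(n-b) * (ℓ:ℝ)^4) := by
              rw [hDcast, ← h2b]; ring
          _ = (z j':ℝ) * ((2:ℝ)^(n-b) * (ℓ:ℝ)^4) := by rw [e2]
          _ = _ := by ring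
      rw [hqdef]
      push_cast
      linear_combination e2' - e1'
    have hqabs : ∀ j' ∈ Finset.univ.filter (fun j' => a j' = b), (q j').natAbs ≤ D := by
      intro j' hj'
      have h1 := hq j' hj'
      have h2 : |t j - t j'| ≤ 1 := by
        rw [abs_le]
        constructor <;> [linarith [(hrng j).1, (hrng j').2]; linarith [(hrng j).2, (hrng j').1]]
      have h3 : |(q j' : ℝ)| ≤ D := by
        rw [h1, abs_mul, abs_of_pos hDR]
        nlinarith
      have h4 : ((q j').natAbs : ℝ) ≤ D := by
        rw [Nat.cast_natAbs, Int.cast_abs] at *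
        exact h3
      exact_mod_cast h4
    -- per-term bound
    set H : ℤ → ℝ := fun x => if x.natAbs = 0 ∨ x.natAbs = D then (1:ℝ)
      else (P:ℝ)/2 * (1/(x.natAbs:ℝ) + 1/((D:ℝ) - x.natAbs)) with hHdef
    have hterm : ∀ j' ∈ Finset.univ.filter (fun j' => a j' = b),
        |(S N (t j - t j')).re| ≤ H (q j') := by
      intro j' hj'
      simp only [hHdef]
      by_cases hc : (q j').natAbs = 0 ∨ (q j').natAbs = D
      · rw [if_pos hc]
        exact abs_S_le_one N hN _
      · rw [if_neg hc]
        push_neg at hc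
        refine term_bound N P D hN hP hDdef (t j - t j') (q j') (hq j' hj') ?_ ?_
        · intro h0
          exact hc.1 (by simp [h0])
        · have := hqabs j' hj'
          omega
    calc ∑ j' ∈ Finset.univ.filter (fun j' => a j' = b), |(S N (t j - t j')).re|
        ≤ ∑ j' ∈ Finset.univ.filter (fun j' => a j' = b), H (q j') :=
          Finset.sum_le_sum hterm
      _ = ∑ x ∈ (Finset.univ.filter (fun j' => a j' = b)).image q, H x := by
          rw [Finset.sum_image]
          intro x hx y hy hxy
          have h1 := hq x hx
          have h2 := hq y hy
          rw [hxy] at h1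
          have : t x = t y := by
            have := h1.symm.trans h2
            have hD0 : (D:ℝ) ≠ 0 := ne_of_gt hDR
            field_simp at this
            linarith
          exact hmono.injective this
      _ ≤ ∑ x ∈ Finset.Icc (-(D:ℤ)) (D:ℤ), H x := by
          refine Finset.sum_le_sum_of_subset_of_nonneg ?_ ?_
          · intro x hx
            obtain ⟨j', hj', rfl⟩ := Finset.mem_image.mp hx
            have := hqabs j' hj'
            simp only [Finset.mem_Icc]
            omega
          · intro x hx _
            simp only [hHdef]
            by_cases hc : x.natAbs = 0 ∨ x.natAbs = D
            · rw [if_pos hc]; norm_num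
            · rw [if_neg hc]
              push_neg at hc
              simp only [Finset.mem_Icc] at hx
              have hle : x.natAbs ≤ D := by omega
              have hlt : x.natAbs < D := lt_of_le_of_ne hle hc.2
              have h1 : (0:ℝ) ≤ 1/(x.natAbs:ℝ) := by positivity
              have h2 : (0:ℝ) ≤ 1/((D:ℝ) - x.natAbs) := by
                apply le_of_lt
                apply div_pos one_pos
                have : ((x.natAbs:ℕ):ℝ) < D := by exact_mod_cast hlt
                linarith
              positivity
      _ ≤ 3 + 2*(P:ℝ)*(1 + 9*n) := by
          refine sum_H_le D P n hD1 hn ?_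
          -- log D ≤ 9n
          have hDle : (D:ℝ) ≤ (2:ℝ)^n * (n:ℝ)^8 := by
            rw [hDdef, hPdef, hNdef]
            push_cast
            have hl : (ℓ:ℝ) ≤ n := by exact_mod_cast hℓn
            have hbr : (b:ℝ) ≤ n := by exact_mod_cast hbn
            have hl0 : (0:ℝ) ≤ ℓ := by positivity
            have hb0 : (0:ℝ) ≤ b := by positivity
            have h1 : (ℓ:ℝ)^4 ≤ (n:ℝ)^4 := pow_le_pow_left₀ hl0 hl 4
            have h2 : (b:ℝ)^4 ≤ (n:ℝ)^4 := pow_le_pow_left₀ hb0 hbr 4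
            have h3 : (0:ℝ) < (2:ℝ)^n := by positivity
            have h12 : (ℓ:ℝ)^4*(b:ℝ)^4 ≤ (n:ℝ)^8 := by
              calc (ℓ:ℝ)^4*(b:ℝ)^4 ≤ (n:ℝ)^4*(n:ℝ)^4 :=
                    mul_le_mul h1 h2 (pow_nonneg hb0 4) (pow_nonneg (hl0.trans hl) 4)
                _ = (n:ℝ)^8 := by ring
            exact mul_le_mul_of_nonneg_left h12 (le_of_lt h3)
          have hlog1 : Real.log D ≤ Real.log ((2:ℝ)^n * (n:ℝ)^8) :=
            Real.log_le_log hDR hDle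
          have hn0 : (0:ℝ) < n := by linarith
          have hlog2 : Real.log ((2:ℝ)^n * (n:ℝ)^8) = n * Real.log 2 + 8 * Real.log n := by
            rw [Real.log_mul (by positivity) (by positivity), Real.log_pow, Real.log_pow]
            push_cast
            ring
          have hlog3 : Real.log 2 ≤ 1 := by
            have := Real.log_two_lt_d9
            linarith
          have hlog4 : Real.log n ≤ n := by
            have := Real.log_le_sub_one_of_pos hn0
            linarith
          rw [hlog2] at hlog1
          calc Real.log D ≤ n * Real.log 2 + 8 * Real.log n := hlog1
            _ ≤ n * 1 + 8 * n := by
                refine add_le_add ?_ ?_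
                · exact mul_le_mul_of_nonneg_left hlog3 (by positivity)
                · linarith
            _ = 9 * n := by ring
      _ ≤ 23 * (n:ℝ)^9 := by
          have hPle : (P:ℝ) ≤ (n:ℝ)^8 := by
            rw [hPdef]
            push_cast
            have hl : (ℓ:ℝ) ≤ n := by exact_mod_cast hℓn
            have hbr : (b:ℝ) ≤ n := by exact_mod_cast hbn
            have hl0 : (0:ℝ) ≤ ℓ := by positivity
            have hb0 : (0:ℝ) ≤ b := by positivity
            have h1 : (ℓ:ℝ)^4 ≤ (n:ℝ)^4 := pow_le_pow_left₀ hl0 hl 4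
            have h2 : (b:ℝ)^4 ≤ (n:ℝ)^4 := pow_le_pow_left₀ hb0 hbr 4
            calc (ℓ:ℝ)^4 * (b:ℝ)^4 ≤ (n:ℝ)^4 * (n:ℝ)^4 := by
                  apply mul_le_mul h1 h2 (by positivity) (by positivity)
              _ = (n:ℝ)^8 := by ring
          have h8 : (n:ℝ)^8 ≤ (n:ℝ)^9 := pow_le_pow_right₀ hn1 (by norm_num)
          have h9 : (1:ℝ) ≤ (n:ℝ)^9 := one_le_pow₀ hn1
          have hP0 : (0:ℝ) ≤ P := by positivity
          nlinarith
  calc ∑ b ∈ Finset.Icc 1 n, ∑ j' ∈ Finset.univ.filter (fun j' => a j' = b),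
        |(S N (t j - t j')).re|
      ≤ ∑ b ∈ Finset.Icc 1 n, 23 * (n:ℝ)^9 := Finset.sum_le_sum fiber_bound
    _ = n * (23 * (n:ℝ)^9) := by
        rw [Finset.sum_const, Nat.card_Icc]
        simp
    _ = 23 * (n:ℝ)^10 := by ring

/-- There is a universal constant `C` such that: for any `n ≥ 1` and points
`0 ≤ t₁ < … < t_m ≤ 1`, each of the form `q/(2^ℓ·ℓ⁴)` for some `1 ≤ ℓ ≤ n`, the real part `W` of
`(1/2^n)·Σ_{k<2^n} v_k v_k†`, where `(v_k)_j = exp(2πi·k·t_j)`, satisfies `‖W‖ ≤ C·n^10`. -/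
theorem dft_operator_norm_bound :
    ∃ C : ℝ, 0 < C ∧
      ∀ (n m : ℕ), 1 ≤ n → ∀ t : Fin m → ℝ,
        StrictMono t →
        (∀ j, 0 ≤ t j ∧ t j ≤ 1) →
        (∀ j, ∃ ℓ ∈ Finset.Icc 1 n, ∃ z : ℤ, t j * 2 ^ ℓ * ℓ ^ 4 = (z : ℝ)) →
        opNorm (Matrix.of fun j j' : Fin m =>
            ((2 ^ n : ℂ)⁻¹ * ∑ k ∈ Finset.range (2 ^ n),
              Complex.exp (2 * Real.pi * Complex.I * k * (t j)) *
                (starRingEnd ℂ) (Complex.exp (2 * Real.pi * Complex.I * k * (t j')))).re)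
          ≤ C * (n : ℝ) ^ 10 := by
  refine ⟨23, by norm_num, ?_⟩
  intro n m hn t hmono hrng hden
  have hcast : (2 ^ n : ℂ) = (((2^n : ℕ)) : ℂ) := by push_cast; ring
  have hentry : ∀ j j' : Fin m,
      (Matrix.of fun j j' : Fin m =>
        ((2 ^ n : ℂ)⁻¹ * ∑ k ∈ Finset.range (2 ^ n),
          Complex.exp (2 * Real.pi * Complex.I * k * (t j)) *
            (starRingEnd ℂ) (Complex.exp (2 * Real.pi * Complex.I * k * (t j')))).re) j j'
      = (S (2^n) (t j - t j')).re := by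
    intro j j'
    rw [Matrix.of_apply, hcast, entry_eq]
  refine schur_bound _ (23*(n:ℝ)^10) (by positivity) ?_ ?_
  · intro i
    calc (∑ j', |(Matrix.of fun j j' : Fin m =>
          ((2 ^ n : ℂ)⁻¹ * ∑ k ∈ Finset.range (2 ^ n),
            Complex.exp (2 * Real.pi * Complex.I * k * (t j)) *
              (starRingEnd ℂ) (Complex.exp (2 * Real.pi * Complex.I * k * (t j')))).re) i j'|)
        = ∑ j', |(S (2^n) (t i - t j')).re| := by
          refine Finset.sum_congr rfl fun j' _ => ?_
          rw [hentry]
      _ ≤ 23*(n:ℝ)^10 := row_sum_bound n m hn t hmono hrng hden i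
  · intro j
    calc (∑ i, |(Matrix.of fun j j' : Fin m =>
          ((2 ^ n : ℂ)⁻¹ * ∑ k ∈ Finset.range (2 ^ n),
            Complex.exp (2 * Real.pi * Complex.I * k * (t j)) *
              (starRingEnd ℂ) (Complex.exp (2 * Real.pi * Complex.I * k * (t j')))).re) i j|)
        = ∑ i, |(S (2^n) (t j - t i)).re| := by
          refine Finset.sum_congr rfl fun i _ => ?_
          rw [hentry]
          rw [show t i - t j = -(t j - t i) by ring, S_neg_re]
      _ ≤ 23*(n:ℝ)^10 := row_sum_bound n m hn t hmono hrng hden j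
end
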